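/- Let A = KQ/I where Q is the quiver with vertices {1,2,3,4,5} and arrows α: 2→1, β: 3→2, γ: 3→1, δ: 5→3, ε: 4→3, and I = ⟨αβ⟩, and let θ ∈ Z^5 be a weight with θ(2) ≠ 0. Then for any θ-semi-stable dimension vector h of A, the module variety mod(A,h) has at most one θ-stable irreducible component. Moreover, for any two θ-stable dimension vectors h_1, h_2 with h_1(2) ≥ 1 and h_2(2) ≥ 1, the θ-stable loci mod(D_5, h_1)^{s}_θ and mod(D̃_4, h_2)^{s}_θ cannot both be non-empty, where D_5 is the subquiver of Q obtained by deleting the arrow β, and D̃_4 the subquiver obtained by deleting the arrow α. -/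

import Mathlib

/- ------------------------------------------------------------------
  Common framework: quivers, matrix representation varieties with the
  Zariski topology, the base-change group action, (semi-)stability,
  Schur modules, direct sums, moduli spaces as topological GIT
  quotients, semi-invariants, normality via coordinate rings, and the
  tame / Schur-tame / strictly wild conditions.
------------------------------------------------------------------ -/

namespace ModuliPaper

/-- A finite quiver: vertices `V`, arrows `Ar`, tail `s` and head `t`. -/
structure Quiv where
  V : Type
  Ar : Type
  [fintV : Fintype V]
  [decV : DecidableEq V]
  [fintA : Fintype Ar]
  [decA : DecidableEq Ar]
  s : Ar → V
  t : Ar → V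

attribute [instance] Quiv.fintV Quiv.decV Quiv.fintA Quiv.decA

variable (K : Type) [Field K]

/-- Affine space over `K`, carrying the Zariski topology (below). -/
def AffSp (ι : Type) : Type := ι → K

/-- The Zariski topology on affine space: the basic open sets are the
complements of hypersurfaces. -/
noncomputable instance AffSp.topologicalSpace (ι : Type) : TopologicalSpace (AffSp K ι) :=
  TopologicalSpace.generateFrom
    {U | ∃ p : MvPolynomial ι K, U = {x : AffSp K ι | MvPolynomial.eval x p ≠ 0}}

/-- A point of the representation space of the quiver `Q` with dimension
vector `d`: a matrix for every arrow. -/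
structure Rep (Q : Quiv) (d : Q.V → ℕ) where
  mat : ∀ a : Q.Ar, Matrix (Fin (d (Q.t a))) (Fin (d (Q.s a))) K

/-- The coordinates of the representation space. -/
def CoordIdx (Q : Quiv) (d : Q.V → ℕ) : Type :=
  Σ a : Q.Ar, Fin (d (Q.t a)) × Fin (d (Q.s a))

def Rep.coords {Q : Quiv} {d : Q.V → ℕ} (M : Rep K Q d) : AffSp K (CoordIdx Q d) :=
  fun c => M.mat c.1 c.2.1 c.2.2

/-- The Zariski topology on the representation space. -/
noncomputable instance Rep.topologicalSpace (Q : Quiv) (d : Q.V → ℕ) :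
    TopologicalSpace (Rep K Q d) :=
  TopologicalSpace.induced (Rep.coords K) inferInstance

/-- The base change group `GL(d) = ∏ₓ GL(d(x),K)` (as a family of invertible
matrices) acting by simultaneous conjugation. -/
def glAct {Q : Quiv} {d : Q.V → ℕ}
    (g : ∀ x : Q.V, Matrix.GeneralLinearGroup (Fin (d x)) K) (M : Rep K Q d) :
    Rep K Q d :=
  ⟨fun a => (g (Q.t a) : Matrix (Fin (d (Q.t a))) (Fin (d (Q.t a))) K) * M.mat a *
    (((g (Q.s a))⁻¹ : Matrix.GeneralLinearGroup (Fin (d (Q.s a))) K) :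
      Matrix (Fin (d (Q.s a))) (Fin (d (Q.s a))) K)⟩

/-- Two points are isomorphic as modules iff they lie in the same `GL(d)`-orbit. -/
def Iso {Q : Quiv} {d : Q.V → ℕ} (M N : Rep K Q d) : Prop :=
  ∃ g, glAct K g M = N

/-- The `GL(d)`-orbit of a point of the representation space. -/
def glOrbit {Q : Quiv} {d : Q.V → ℕ} (M : Rep K Q d) : Set (Rep K Q d) :=
  {N | Iso K M N}

def IsGLInvariant {Q : Quiv} {d : Q.V → ℕ} (C : Set (Rep K Q d)) : Prop :=
  ∀ g M, M ∈ C → glAct K g M ∈ C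

/-- `C` is the closure of a single `GL(d)`-orbit. -/
def IsOrbitClosure {Q : Quiv} {d : Q.V → ℕ} (C : Set (Rep K Q d)) : Prop :=
  ∃ M : Rep K Q d, C = closure (glOrbit K M)

/-- Paths in a quiver, via Mathlib's `Quiver.Path`. -/
instance quivQuiver (Q : Quiv) : Quiver Q.V :=
  ⟨fun x y => {a : Q.Ar // Q.s a = x ∧ Q.t a = y}⟩

/-- The linear map attached to an arrow by a representation. -/
def arrowEval {Q : Quiv} {d : Q.V → ℕ} (M : Rep K Q d) {x y : Q.V} (e : x ⟶ y) :
    (Fin (d x) → K) →ₗ[K] (Fin (d y) → K) := by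
  obtain ⟨a, rfl, rfl⟩ := e
  exact (M.mat a).mulVecLin

/-- The linear map attached to a path by a representation. -/
def pathEval {Q : Quiv} {d : Q.V → ℕ} (M : Rep K Q d) :
    {x y : Q.V} → Quiver.Path x y → ((Fin (d x) → K) →ₗ[K] (Fin (d y) → K))
  | _, _, Quiver.Path.nil => LinearMap.id
  | _, _, Quiver.Path.cons p e => (arrowEval K M e).comp (pathEval M p)

/-- The evaluation of a K-linear combination of parallel paths (an element of the
path algebra) on a representation. -/
noncomputable def relEval {Q : Quiv} {d : Q.V → ℕ} (M : Rep K Q d) {x y : Q.V}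
    (r : Quiver.Path x y →₀ K) : (Fin (d x) → K) →ₗ[K] (Fin (d y) → K) :=
  r.sum fun p c => c • pathEval K M p

/-- A set of relations for a quiver: admissible elements of the path algebra. -/
structure RelSet (Q : Quiv) where
  rels : Set (Σ x y : Q.V, (Quiver.Path x y →₀ K))

/-- The module variety `mod(A,d)` of the bound quiver algebra `A = KQ/I`,
`I = ⟨rels⟩`: the locus where all relations vanish. -/
noncomputable def modVar {Q : Quiv} (R : RelSet K Q) (d : Q.V → ℕ) : Set (Rep K Q d) :=
  {M | ∀ r ∈ R.rels, relEval K M r.2.2 = 0}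

/-- `Q` has no oriented cycles. -/
def Quiv.IsAcyclic (Q : Quiv) : Prop :=
  ∀ (x : Q.V) (p : Quiver.Path x x), p = Quiver.Path.nil

/-- Admissibility of the ideal of relations, encoded semantically:
every relation lies in (the span of paths of) length `≥ 2`, and some power of the
arrow ideal is contained in the ideal of relations (i.e. sufficiently long paths
act by `0` on every module of the algebra). -/
noncomputable def RelSet.IsAdmissible {Q : Quiv} (R : RelSet K Q) : Prop :=
  (∀ r ∈ R.rels, ∀ p ∈ (r.2.2).support, 2 ≤ p.length) ∧
  ∃ L : ℕ, ∀ (d : Q.V → ℕ), ∀ M ∈ modVar K R d, ∀ (x y : Q.V) (p : Quiver.Path x y),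
    L ≤ p.length → pathEval K M p = 0

/-- A subrepresentation (= submodule) of a representation. -/
structure SubRep {Q : Quiv} {d : Q.V → ℕ} (M : Rep K Q d) where
  space : ∀ x : Q.V, Submodule K (Fin (d x) → K)
  stable : ∀ a : Q.Ar, ∀ v ∈ space (Q.s a), (M.mat a).mulVec v ∈ space (Q.t a)

/-- The dimension vector of a subrepresentation. -/
noncomputable def SubRep.dimVec {Q : Quiv} {d : Q.V → ℕ} {M : Rep K Q d}
    (W : SubRep K M) : Q.V → ℕ :=
  fun x => Module.finrank K (W.space x)

/-- The pairing `θ(e) = ∑ₓ θ(x) e(x)` of a weight with a dimension vector. -/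
def wt {Q : Quiv} (θ : Q.V → ℤ) (e : Q.V → ℕ) : ℤ := ∑ x : Q.V, θ x * (e x : ℤ)

/-- King's θ-semi-stability. -/
def IsSemiStable {Q : Quiv} {d : Q.V → ℕ} (θ : Q.V → ℤ) (M : Rep K Q d) : Prop :=
  wt θ d = 0 ∧ ∀ W : SubRep K M, wt θ (W.dimVec K) ≤ 0

/-- King's θ-stability. -/
def IsStable {Q : Quiv} {d : Q.V → ℕ} (θ : Q.V → ℤ) (M : Rep K Q d) : Prop :=
  d ≠ 0 ∧ wt θ d = 0 ∧
    ∀ W : SubRep K M, W.dimVec K ≠ 0 → W.dimVec K ≠ d → wt θ (W.dimVec K) < 0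

/-- Morphisms of representations. -/
def IsHom {Q : Quiv} {d d' : Q.V → ℕ} (M : Rep K Q d) (N : Rep K Q d')
    (φ : ∀ x : Q.V, Matrix (Fin (d' x)) (Fin (d x)) K) : Prop :=
  ∀ a : Q.Ar, φ (Q.t a) * M.mat a = N.mat a * φ (Q.s a)

/-- Endomorphisms of a representation. -/
def IsEndo {Q : Quiv} {d : Q.V → ℕ} (M : Rep K Q d)
    (φ : ∀ x : Q.V, Matrix (Fin (d x)) (Fin (d x)) K) : Prop :=
  IsHom K M M φ

/-- A Schur module: all endomorphisms are scalar, i.e. `End_A(M) ≅ K`. -/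
def IsSchur {Q : Quiv} {d : Q.V → ℕ} (M : Rep K Q d) : Prop :=
  ∀ φ, IsEndo K M φ → ∃ c : K, ∀ x : Q.V, φ x = c • (1 : Matrix (Fin (d x)) (Fin (d x)) K)

/-- The direct sum of two representations. -/
def dsum {Q : Quiv} {d₁ d₂ : Q.V → ℕ} (M : Rep K Q d₁) (N : Rep K Q d₂) :
    Rep K Q (d₁ + d₂) :=
  ⟨fun a => Matrix.reindex finSumFinEquiv finSumFinEquiv
    (Matrix.fromBlocks (M.mat a) 0 0 (N.mat a))⟩

/-- Transport of a representation along an equality of dimension vectors. -/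
def recast {Q : Quiv} {d d' : Q.V → ℕ} (h : d = d') (M : Rep K Q d) : Rep K Q d' :=
  h ▸ M

/-- The dimension vector of a list of representations. -/
def sumDim {Q : Quiv} : List (Σ e : Q.V → ℕ, Rep K Q e) → (Q.V → ℕ)
  | [] => 0
  | x :: L => x.1 + sumDim L

/-- The direct sum of a list of representations. -/
def listSum {Q : Quiv} : (L : List (Σ e : Q.V → ℕ, Rep K Q e)) → Rep K Q (sumDim K L)
  | [] => ⟨fun _ => 0⟩
  | x :: L => dsum K x.2 (listSum L)

/-- `M` is isomorphic to the direct sum of the members of the list `L`. -/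
def IsDirectSumOf {Q : Quiv} {d : Q.V → ℕ} (M : Rep K Q d)
    (L : List (Σ e : Q.V → ℕ, Rep K Q e)) : Prop :=
  ∃ h : sumDim K L = d, Iso K (recast K h (listSum K L)) M

/-- Indecomposability of a representation. -/
def Indec {Q : Quiv} {d : Q.V → ℕ} (M : Rep K Q d) : Prop :=
  d ≠ 0 ∧ ∀ (d₁ d₂ : Q.V → ℕ) (M₁ : Rep K Q d₁) (M₂ : Rep K Q d₂) (h : d₁ + d₂ = d),
    d₁ ≠ 0 → d₂ ≠ 0 → ¬ Iso K (recast K h (dsum K M₁ M₂)) M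

/-- An irreducible component of a (closed) subvariety `Z` of the representation
space: a maximal irreducible closed subset of `Z`. -/
def IsIrrComp {Q : Quiv} {d : Q.V → ℕ} (Z C : Set (Rep K Q d)) : Prop :=
  C ⊆ Z ∧ IsClosed C ∧ IsIrreducible C ∧
    ∀ D : Set (Rep K Q d), D ⊆ Z → IsClosed D → IsIrreducible D → C ⊆ D → C = D

/-- The θ-semi-stable locus of `C`. -/
def ssLocus {Q : Quiv} {d : Q.V → ℕ} (C : Set (Rep K Q d)) (θ : Q.V → ℤ) :
    Set (Rep K Q d) :=
  {M | M ∈ C ∧ IsSemiStable K θ M}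

/-- S-equivalence on the semistable locus: orbit closures meet inside the
semistable locus.  The GIT quotient identifies exactly S-equivalent points. -/
def SEquiv {Q : Quiv} {d : Q.V → ℕ} (C : Set (Rep K Q d)) (θ : Q.V → ℤ)
    (M N : ↥(ssLocus K C θ)) : Prop :=
  (closure (glOrbit K M.1) ∩ closure (glOrbit K N.1) ∩ ssLocus K C θ).Nonempty

/-- The moduli space `M(C)^{ss}_θ` of θ-semi-stable modules in `C`, realized
(as a topological space) as the quotient of the semistable locus of `C` by
S-equivalence; its points are the θ-polystable modules in `C`. -/
def ModuliSpace {Q : Quiv} {d : Q.V → ℕ} (C : Set (Rep K Q d)) (θ : Q.V → ℤ) : Type :=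
  Quot (SEquiv K C θ)

noncomputable instance {Q : Quiv} {d : Q.V → ℕ} (C : Set (Rep K Q d)) (θ : Q.V → ℤ) :
    TopologicalSpace (ModuliSpace K C θ) :=
  instTopologicalSpaceQuot

/-- The image of `C^{ss}_θ` in the moduli space of the ambient variety `Z`:
this is `M(C)^{ss}_θ` as a (closed) subvariety of `M(Z)^{ss}_θ`. -/
def moduliImage {Q : Quiv} {d : Q.V → ℕ} (Z C : Set (Rep K Q d)) (θ : Q.V → ℤ) :
    Set (ModuliSpace K Z θ) :=
  Quot.mk _ '' {M : ↥(ssLocus K Z θ) | M.1 ∈ C}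

/-- The `m`-th symmetric power of a topological space. -/
def SymPow (m : ℕ) (X : Type*) [TopologicalSpace X] : Type _ :=
  Quot (fun f g : Fin m → X => ∃ σ : Equiv.Perm (Fin m), f = g ∘ σ)

noncomputable instance (m : ℕ) (X : Type*) [TopologicalSpace X] :
    TopologicalSpace (SymPow m X) :=
  instTopologicalSpaceQuot

/-- Projective `m`-space over `K` with its Zariski topology (quotient of the
punctured affine cone). -/
def ProjSpace (m : ℕ) : Type :=
  Quot (fun v w : {x : AffSp K (Fin (m + 1)) // ∃ i, x i ≠ 0} =>
    ∃ c : K, c ≠ 0 ∧ ∀ i, w.1 i = c * v.1 i)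

noncomputable instance (m : ℕ) : TopologicalSpace (ProjSpace K m) :=
  instTopologicalSpaceQuot

/-- A product of projective spaces `ℙ^{m 0} × ⋯ × ℙ^{m (n-1)}` over `K`, with its
Zariski topology (quotient of a product of punctured affine cones, carrying the
Zariski topology of the total affine space). -/
def ProdProj (n : ℕ) (m : Fin n → ℕ) : Type :=
  Quot (fun v w : {x : AffSp K (Σ i : Fin n, Fin (m i + 1)) // ∀ i, ∃ j, x ⟨i, j⟩ ≠ 0} =>
    ∃ c : Fin n → K, (∀ i, c i ≠ 0) ∧ ∀ i j, w.1 ⟨i, j⟩ = c i * v.1 ⟨i, j⟩)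

noncomputable instance (n : ℕ) (m : Fin n → ℕ) : TopologicalSpace (ProdProj K n m) :=
  instTopologicalSpaceQuot

end ModuliPaper
namespace ModuliPaper

variable (K : Type) [Field K]

/- --------------------- semi-invariants --------------------- -/

/-- The value of the character `χ_θ` of `GL(d)` at `g`:
`χ_θ(g) = ∏ₓ det(g(x))^{θ(x)}`. -/
noncomputable def chiWt {Q : Quiv} {d : Q.V → ℕ} (θ : Q.V → ℤ)
    (g : ∀ x : Q.V, Matrix.GeneralLinearGroup (Fin (d x)) K) : K :=
  ∏ x : Q.V, ((g x : Matrix (Fin (d x)) (Fin (d x)) K).det) ^ (θ x)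

/-- A semi-invariant of weight `χ_θ` on `C`: a regular (polynomial) function on
`C` satisfying `f(g·M) = χ_θ(g)·f(M)`. -/
def IsSemiInvariant {Q : Quiv} {d : Q.V → ℕ} (C : Set (Rep K Q d)) (θ : Q.V → ℤ)
    (f : ↥C → K) : Prop :=
  (∃ p : MvPolynomial (CoordIdx Q d) K,
      ∀ M : ↥C, f M = MvPolynomial.eval (Rep.coords K M.1) p) ∧
  ∀ (g) (M : ↥C) (h : glAct K g M.1 ∈ C), f ⟨glAct K g M.1, h⟩ = chiWt K θ g * f M

/-- The space `SI(C)_θ` of semi-invariants of weight `χ_θ` on `C`. -/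
noncomputable def SIModule {Q : Quiv} {d : Q.V → ℕ} (C : Set (Rep K Q d))
    (θ : Q.V → ℤ) : Submodule K (↥C → K) where
  carrier := {f | IsSemiInvariant K C θ f}
  add_mem' := by
    rintro f₁ f₂ ⟨⟨p₁, hp₁⟩, hw₁⟩ ⟨⟨p₂, hp₂⟩, hw₂⟩
    refine ⟨⟨p₁ + p₂, fun M => ?_⟩, fun g M h => ?_⟩
    · simp [hp₁ M, hp₂ M]
    · have := hw₁ g M h; have := hw₂ g M h
      simp only [Pi.add_apply, *]; ring
  zero_mem' := ⟨⟨0, fun M => by simp⟩, fun g M h => by simp⟩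
  smul_mem' := by
    rintro c f ⟨⟨p, hp⟩, hw⟩
    refine ⟨⟨c • p, fun M => ?_⟩, fun g M h => ?_⟩
    · simp [hp M, MvPolynomial.smul_eval]; exact (MvPolynomial.smul_eval _ p c).symm
    · have := hw g M h
      simp only [Pi.smul_apply, smul_eq_mul, *]; ring

/- --------------------- coordinate rings and normality --------------------- -/

/-- The vanishing ideal of a subset of the representation space. -/
noncomputable def vanishingIdeal {Q : Quiv} {d : Q.V → ℕ} (C : Set (Rep K Q d)) :
    Ideal (MvPolynomial (CoordIdx Q d) K) where
  carrier := {p | ∀ M ∈ C, MvPolynomial.eval (Rep.coords K M) p = 0}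
  add_mem' := by intro p q hp hq M hM; simp [hp M hM, hq M hM]
  zero_mem' := by intro M hM; simp
  smul_mem' := by intro c p hp M hM; simp [smul_eq_mul, hp M hM]

/-- The coordinate ring `K[C]` of a subvariety of the representation space. -/
noncomputable def coordRing {Q : Quiv} {d : Q.V → ℕ} (C : Set (Rep K Q d)) : Type :=
  MvPolynomial (CoordIdx Q d) K ⧸ vanishingIdeal K C

noncomputable instance {Q : Quiv} {d : Q.V → ℕ} (C : Set (Rep K Q d)) :
    CommRing (coordRing K C) :=
  Ideal.Quotient.commRing _

/-- Normality of a variety: its coordinate ring is an integrally closed domain. -/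
def IsNormalVar {Q : Quiv} {d : Q.V → ℕ} (C : Set (Rep K Q d)) : Prop :=
  IsDomain (coordRing K C) ∧ IsIntegrallyClosed (coordRing K C)

/- --------------------- gentle and string algebras --------------------- -/

/-- "at most one element" of a set. -/
def AtMostOne {α : Type*} (s : Set α) : Prop := ∀ a ∈ s, ∀ b ∈ s, a = b

/-- "at most two elements" of a set. -/
def AtMostTwo {α : Type*} (s : Set α) : Prop :=
  ∀ a ∈ s, ∀ b ∈ s, ∀ c ∈ s, a = b ∨ a = c ∨ b = c

/-- A set of monomial (length-two) relations: pairs `(a,b)` of composable arrows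
(`a` followed by `b`), generating the ideal `I = ⟨{ba : (a,b) ∈ R}⟩`. -/
structure PairRels (Q : Quiv) where
  R : Set (Q.Ar × Q.Ar)
  comp : ∀ p ∈ R, Q.t p.1 = Q.s p.2

/-- The module variety of the algebra `KQ/⟨R⟩` with length-two monomial
relations `R`: the locus where all composites `M(b)M(a)`, `(a,b) ∈ R`, vanish. -/
def pairModVar {Q : Quiv} (P : PairRels Q) (d : Q.V → ℕ) : Set (Rep K Q d) :=
  {M | ∀ a b, (hab : (a, b) ∈ P.R) →
    ∀ (i : Fin (d (Q.t b))) (j : Fin (d (Q.s a))),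
      ∑ k : Fin (d (Q.t a)),
        M.mat b i (finCongr (congrArg d (P.comp (a, b) hab)) k) * M.mat a k j = 0}

/-- The gentle conditions on a bound quiver `(Q, I)` with `I` generated by the
length-two paths in `R`. -/
def PairRels.IsGentle {Q : Quiv} (P : PairRels Q) : Prop :=
  (∀ x : Q.V, AtMostTwo {a | Q.s a = x} ∧ AtMostTwo {a | Q.t a = x}) ∧
  (∀ a : Q.Ar, AtMostOne {b | Q.t a = Q.s b ∧ (a, b) ∉ P.R} ∧
               AtMostOne {b | Q.t b = Q.s a ∧ (b, a) ∉ P.R}) ∧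
  (∀ a : Q.Ar, AtMostOne {b | (a, b) ∈ P.R} ∧ AtMostOne {b | (b, a) ∈ P.R})

/-- The length-two path `a`-then-`b` in `Q`. -/
def path2 {Q : Quiv} (a b : Q.Ar) (h : Q.t a = Q.s b) : Quiver.Path (Q.s a) (Q.t b) :=
  (Quiver.Path.nil.cons (⟨a, rfl, rfl⟩ : (Q.s a : Q.V) ⟶ Q.t a)).cons
    (⟨b, h.symm, rfl⟩ : (Q.t a : Q.V) ⟶ Q.t b)

/-- A set of monomial relations (paths of length `≥ 2`). -/
structure MonRels (Q : Quiv) where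
  R : Set (Σ x y : Q.V, Quiver.Path x y)
  len2 : ∀ r ∈ R, 2 ≤ r.2.2.length

/-- The module variety of the monomial algebra `KQ/⟨R⟩`. -/
def monModVar {Q : Quiv} (R : MonRels Q) (d : Q.V → ℕ) : Set (Rep K Q d) :=
  {M | ∀ r ∈ R.R, pathEval K M r.2.2 = 0}

/-- The length-two path `a`-then-`b` lies in the monomial ideal `⟨R⟩`. -/
def MonRels.pairIn {Q : Quiv} (R : MonRels Q) (a b : Q.Ar) : Prop :=
  ∃ h : Q.t a = Q.s b, (⟨Q.s a, Q.t b, path2 a b h⟩ : Σ x y : Q.V, Quiver.Path x y) ∈ R.R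

/-- The string algebra conditions on a monomial bound quiver `(Q, ⟨R⟩)`. -/
def MonRels.IsString {Q : Quiv} (R : MonRels Q) : Prop :=
  (∀ x : Q.V, AtMostTwo {a | Q.s a = x} ∧ AtMostTwo {a | Q.t a = x}) ∧
  (∀ a : Q.Ar, AtMostOne {b | Q.t a = Q.s b ∧ ¬ R.pairIn a b} ∧
               AtMostOne {b | Q.t b = Q.s a ∧ ¬ R.pairIn b a})

/-- A coloring of a quiver: a map on arrows whose fibres are directed paths. -/
structure Coloring (Q : Quiv) (S : Type) where
  c : Q.Ar → S
  isPath : ∀ s : S, ∃ L : List Q.Ar, L.Nodup ∧ (∀ a, a ∈ L ↔ c a = s) ∧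
    L.Chain' (fun a b => Q.t a = Q.s b)

/-- The set of length-two relations `I_c` induced by a coloring: all composable
pairs of arrows of the same color. -/
def colorRels {Q : Quiv} {S : Type} (col : Coloring Q S) : PairRels Q where
  R := {p | Q.t p.1 = Q.s p.2 ∧ col.c p.1 = col.c p.2}
  comp := fun _ hp => hp.1

/- --------------------- band modules (string algebras) --------------------- -/

/-- Over an acyclic string algebra, the indecomposable modules are string and
band modules (Butler–Ringel), and the band modules are exactly the
indecomposables `M` with `dim M = ∑ₐ rank M(a)`. -/
def IsBand {Q : Quiv} {d : Q.V → ℕ} (M : Rep K Q d) : Prop :=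
  Indec K M ∧ (∑ x : Q.V, d x) = ∑ a : Q.Ar, (M.mat a).rank

/-- `M` is (isomorphic to) a direct sum of band modules. -/
def IsSumOfBands {Q : Quiv} {d : Q.V → ℕ} (M : Rep K Q d) : Prop :=
  ∃ L : List (Σ e : Q.V → ℕ, Rep K Q e), (∀ p ∈ L, IsBand K p.2) ∧ IsDirectSumOf K M L

/-- A regular irreducible component: the generic module of `C` is a direct sum
of band modules. -/
def IsGenericallyBands {Q : Quiv} {d : Q.V → ℕ} (C : Set (Rep K Q d)) : Prop :=
  ∃ U : Set (Rep K Q d), IsOpen U ∧ (U ∩ C).Nonempty ∧ ∀ M ∈ U ∩ C, IsSumOfBands K M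

end ModuliPaper
namespace ModuliPaper

variable (K : Type) [Field K]

/- --------------------- tame and Schur-tame --------------------- -/

/-- A one-parameter algebraic family of `d`-dimensional representations defined
over a localization `K[t]_f` of `K[t]`: a free `K[t]_f`-module structure is
encoded by matrices of polynomials divided by a power of `f`. -/
structure ParamFamily (Q : Quiv) (d : Q.V → ℕ) where
  f : Polynomial K
  hf : f ≠ 0
  k : ℕ
  num : ∀ a : Q.Ar, Matrix (Fin (d (Q.t a))) (Fin (d (Q.s a))) (Polynomial K)

/-- The member of the family at the parameter `lam` (i.e. `T ⊗_{K[t]_f} K[t]/(t-lam)`). -/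
noncomputable def ParamFamily.evalAt {Q : Quiv} {d : Q.V → ℕ} (F : ParamFamily K Q d)
    (lam : K) : Rep K Q d :=
  ⟨fun a => Matrix.of fun i j =>
    Polynomial.eval lam (F.num a i j) / (Polynomial.eval lam F.f) ^ F.k⟩

/-- The algebra with module varieties `MV` is Schur-tame: for every dimension
vector `d` there are finitely many one-parameter families of `d`-dimensional
modules, each consisting of pairwise non-isomorphic Schur modules (a
Schur-embedding `T_i ⊗_{R_i} -`), such that every `d`-dimensional Schur module
— up to finitely many isomorphism classes — belongs to one of the families. -/
noncomputable def IsSchurTame {Q : Quiv} (MV : ∀ d : Q.V → ℕ, Set (Rep K Q d)) : Prop :=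
  ∀ d : Q.V → ℕ, ∃ (n : ℕ) (F : Fin n → ParamFamily K Q d),
    (∀ i lam, Polynomial.eval lam (F i).f ≠ 0 →
      (F i).evalAt K lam ∈ MV d ∧ IsSchur K ((F i).evalAt K lam)) ∧
    (∀ i lam₁ lam₂, Polynomial.eval lam₁ (F i).f ≠ 0 → Polynomial.eval lam₂ (F i).f ≠ 0 →
      Iso K ((F i).evalAt K lam₁) ((F i).evalAt K lam₂) → lam₁ = lam₂) ∧
    ∃ Exc : Set (Rep K Q d), Exc.Finite ∧
      ∀ M ∈ MV d, IsSchur K M →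
        (∃ i lam, Polynomial.eval lam (F i).f ≠ 0 ∧ Iso K M ((F i).evalAt K lam)) ∨
        (∃ E ∈ Exc, Iso K M E)

/-- The algebra with module varieties `MV` is tame: for every dimension vector
`d` there are finitely many one-parameter families of `d`-dimensional modules,
each consisting of pairwise non-isomorphic indecomposable modules (a
representation embedding `T_i ⊗_{R_i} -`), such that every `d`-dimensional
indecomposable module — up to finitely many isomorphism classes — belongs to
one of the families. -/
noncomputable def IsTame {Q : Quiv} (MV : ∀ d : Q.V → ℕ, Set (Rep K Q d)) : Prop :=
  ∀ d : Q.V → ℕ, ∃ (n : ℕ) (F : Fin n → ParamFamily K Q d),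
    (∀ i lam, Polynomial.eval lam (F i).f ≠ 0 →
      (F i).evalAt K lam ∈ MV d ∧ Indec K ((F i).evalAt K lam)) ∧
    (∀ i lam₁ lam₂, Polynomial.eval lam₁ (F i).f ≠ 0 → Polynomial.eval lam₂ (F i).f ≠ 0 →
      Iso K ((F i).evalAt K lam₁) ((F i).evalAt K lam₂) → lam₁ = lam₂) ∧
    ∃ Exc : Set (Rep K Q d), Exc.Finite ∧
      ∀ M ∈ MV d, Indec K M →
        (∃ i lam, Polynomial.eval lam (F i).f ≠ 0 ∧ Iso K M ((F i).evalAt K lam)) ∨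
        (∃ E ∈ Exc, Iso K M E)

/- --------------------- strictly wild algebras --------------------- -/

/-- The representation of `Q` of dimension vector `m • e` obtained from a
template `T` of matrices over the free algebra `K⟨x,y⟩` (encoding an
`A`-`K⟨x,y⟩`-bimodule free of finite rank over `K⟨x,y⟩`) by specializing
`(x,y)` to the pair of `m × m` matrices `(X,Y)`. -/
noncomputable def blockRep {Q : Quiv} (e : Q.V → ℕ) (m : ℕ)
    (T : ∀ a : Q.Ar, Matrix (Fin (e (Q.t a))) (Fin (e (Q.s a))) (FreeAlgebra K (Fin 2)))
    (X Y : Matrix (Fin m) (Fin m) K) : Rep K Q (fun x => e x * m) :=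
  ⟨fun a => Matrix.of fun i j =>
    (FreeAlgebra.lift K ![X, Y] (T a (finProdFinEquiv.symm i).1 (finProdFinEquiv.symm j).1))
      (finProdFinEquiv.symm i).2 (finProdFinEquiv.symm j).2⟩

/-- The block-diagonal family of matrices induced by an `m' × m` matrix `ψ`:
the image of a morphism of `K⟨x,y⟩`-modules under the functor `T ⊗ -`. -/
def blockify {Q : Quiv} (e : Q.V → ℕ) {m m' : ℕ} (ψ : Matrix (Fin m') (Fin m) K) :
    ∀ x : Q.V, Matrix (Fin (e x * m')) (Fin (e x * m)) K :=
  fun _ => Matrix.of fun i j =>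
    if (finProdFinEquiv.symm i).1 = (finProdFinEquiv.symm j).1 then
      ψ (finProdFinEquiv.symm i).2 (finProdFinEquiv.symm j).2
    else 0

/-- Strict wildness of the algebra with module varieties `MV`: there is an exact
`K`-linear functor `mod K⟨x,y⟩ → mod A`, given by tensoring with a bimodule
free of finite rank over `K⟨x,y⟩` (encoded by a template `T`), which is fully
faithful. -/
noncomputable def IsStrictlyWild {Q : Quiv} (MV : ∀ d : Q.V → ℕ, Set (Rep K Q d)) : Prop :=
  ∃ (e : Q.V → ℕ)
    (T : ∀ a : Q.Ar, Matrix (Fin (e (Q.t a))) (Fin (e (Q.s a))) (FreeAlgebra K (Fin 2))),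
    (∀ (m : ℕ) (X Y : Matrix (Fin m) (Fin m) K),
      blockRep K e m T X Y ∈ MV (fun x => e x * m)) ∧
    (∀ (m m' : ℕ) (X Y : Matrix (Fin m) (Fin m) K) (X' Y' : Matrix (Fin m') (Fin m') K),
      -- functoriality: morphisms of `K⟨x,y⟩`-modules map to morphisms
      (∀ ψ : Matrix (Fin m') (Fin m) K, ψ * X = X' * ψ → ψ * Y = Y' * ψ →
        IsHom K (blockRep K e m T X Y) (blockRep K e m' T X' Y') (blockify K e ψ)) ∧
      -- faithfulness
      (∀ ψ₁ ψ₂ : Matrix (Fin m') (Fin m) K, blockify (Q := Q) K e ψ₁ = blockify K e ψ₂ → ψ₁ = ψ₂) ∧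
      -- fullness
      (∀ φ, IsHom K (blockRep K e m T X Y) (blockRep K e m' T X' Y') φ →
        ∃ ψ : Matrix (Fin m') (Fin m) K, ψ * X = X' * ψ ∧ ψ * Y = Y' * ψ ∧ φ = blockify K e ψ))

/- --------------------- θ-stable decompositions --------------------- -/

/-- The list of representations `N i j`, `j < m i`, over the indices `i` with
`i < l`. -/
def famList {Q : Quiv} {nn : ℕ} (dd : Fin nn → Q.V → ℕ) (m : Fin nn → ℕ) (l : ℕ)
    (N : ∀ i : Fin nn, Fin (m i) → Rep K Q (dd i)) : List (Σ e : Q.V → ℕ, Rep K Q e) :=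
  ((List.finRange nn).filter (fun i : Fin nn => decide ((i : ℕ) < l))).flatMap
    (fun i : Fin nn => (List.finRange (m i)).map (fun j => ⟨dd i, N i j⟩))

/-- A θ-stable decomposition `C = m₀·C₀ ∔ m₁·C₁ ∔ ⋯`: for the generic module
`M ∈ C^{ss}_θ`, the associated θ-polystable module `gr_θ(M)` (the unique
polystable module in the closure of the orbit of `M` within the semistable
locus) is a direct sum of θ-stable modules, `m i` of which belong to `Cs i`. -/
def ThetaStableDecomp {Q : Quiv} {d : Q.V → ℕ} (C : Set (Rep K Q d)) (θ : Q.V → ℤ)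
    {nn : ℕ} (dd : Fin nn → Q.V → ℕ) (m : Fin nn → ℕ)
    (Cs : ∀ i, Set (Rep K Q (dd i))) : Prop :=
  ∃ U : Set (Rep K Q d), IsOpen U ∧ (U ∩ C).Nonempty ∧
    ∀ M ∈ U ∩ C, IsSemiStable K θ M ∧
      ∃ N : ∀ i, Fin (m i) → Rep K Q (dd i),
        (∀ i j, N i j ∈ Cs i ∧ IsStable K θ (N i j)) ∧
        ∃ P ∈ closure (glOrbit K M), IsSemiStable K θ P ∧
          IsDirectSumOf K P (famList K dd m nn N)

/-- The dimension vector `∑_{i < l} m i • dd i`. -/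
def belowDim {Q : Quiv} {nn : ℕ} (dd : Fin nn → Q.V → ℕ) (m : Fin nn → ℕ) (l : ℕ) :
    Q.V → ℕ :=
  fun x => ∑ i ∈ Finset.univ.filter (fun i : Fin nn => (i : ℕ) < l), m i * dd i x

/-- The direct sum locus `C₀^{⊕ m₀} ⊕ ⋯ ⊕ C_{l-1}^{⊕ m_{l-1}}`. -/
def sumLocusBelow {Q : Quiv} {nn : ℕ} (dd : Fin nn → Q.V → ℕ) (m : Fin nn → ℕ) (l : ℕ)
    (Cs : ∀ i, Set (Rep K Q (dd i))) : Set (Rep K Q (belowDim dd m l)) :=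
  {M | ∃ N : ∀ i, Fin (m i) → Rep K Q (dd i),
    (∀ (i : Fin nn) (j : Fin (m i)), (i : ℕ) < l → N i j ∈ Cs i) ∧ IsDirectSumOf K M (famList K dd m l N)}

/- --------------------- extensions --------------------- -/

/-- The extension of `N` by `M` (`0 → M → Z → N → 0`) determined by the blocks
`E`: `Z(a) = [[M(a), E(a)], [0, N(a)]]`. -/
def triSum {Q : Quiv} {d₁ d₂ : Q.V → ℕ} (M : Rep K Q d₁) (N : Rep K Q d₂)
    (E : ∀ a : Q.Ar, Matrix (Fin (d₁ (Q.t a))) (Fin (d₂ (Q.s a))) K) :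
    Rep K Q (d₁ + d₂) :=
  ⟨fun a => Matrix.reindex finSumFinEquiv finSumFinEquiv
    (Matrix.fromBlocks (M.mat a) (E a) 0 (N.mat a))⟩

/-- `ext¹_A(D, E) = 0`: the minimal dimension of `Ext¹_A(X,Y)` over
`(X,Y) ∈ D × E` vanishes, i.e. there is a pair `(X,Y) ∈ D × E` all of whose
extensions (inside the module variety `MV`) split. -/
def Ext1Vanishes {Q : Quiv} (MV : ∀ e : Q.V → ℕ, Set (Rep K Q e)) {dX dY : Q.V → ℕ}
    (D : Set (Rep K Q dX)) (E : Set (Rep K Q dY)) : Prop :=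
  ∃ X ∈ D, ∃ Y ∈ E, ∀ B, triSum K Y X B ∈ MV (dY + dX) →
    Iso K (triSum K Y X B) (dsum K Y X)

end ModuliPaper
namespace ModuliPaper

/-- The quiver of Theorem 2: vertices `1,…,5` (as `0,…,4 : Fin 5`), arrows
`α : 2→1`, `β : 3→2`, `γ : 3→1`, `δ : 5→3`, `ε : 4→3`
(as `0,…,4 : Fin 5`, with tails `![1,2,2,4,3]` and heads `![0,1,0,2,2]`). -/
abbrev Q5 : Quiv where
  V := Fin 5
  Ar := Fin 5
  s := ![1, 2, 2, 4, 3]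
  t := ![0, 1, 0, 2, 2]

/-- The relation `I = ⟨αβ⟩`: the composition `β` (arrow `1`) followed by `α`
(arrow `0`). -/
def R5 : PairRels Q5 where
  R := {p : Fin 5 × Fin 5 | p = (1, 0)}
  comp := by rintro p hp; rw [Set.mem_setOf_eq] at hp; subst hp; decide

end ModuliPaper

namespace ModuliPaper

/-- The subvariety `mod(D₅,h)` of `mod(A,h)`: representations of the subquiver
of `Q5` obtained by deleting the arrow `β` (arrow index `1`). -/
def D5Var (K : Type) [Field K] (h : Fin 5 → ℕ) : Set (Rep K Q5 h) :=
  {M | M.mat 1 = 0}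

/-- The subvariety `mod(D̃₄,h)` of `mod(A,h)`: representations of the subquiver
of `Q5` obtained by deleting the arrow `α` (arrow index `0`). -/
def D4tVar (K : Type) [Field K] (h : Fin 5 → ℕ) : Set (Rep K Q5 h) :=
  {M | M.mat 0 = 0}

/- ------------------ auxiliary development ------------------ -/
section Aux

variable {K : Type} [Field K]

/-- dependent `Fin 5` chooser -/
def pick5 {α : Fin 5 → Sort*} (a0 : α 0) (a1 : α 1) (a2 : α 2) (a3 : α 3) (a4 : α 4) :
    ∀ x : Fin 5, α x := fun x =>
  match x with
  | ⟨0, _⟩ => a0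
  | ⟨1, _⟩ => a1
  | ⟨2, _⟩ => a2
  | ⟨3, _⟩ => a3
  | ⟨4, _⟩ => a4

/-- The matrix of the arrow `α`, with cleanly displayed types. -/
def mat0 {h : Fin 5 → ℕ} (M : Rep K Q5 h) : Matrix (Fin (h 0)) (Fin (h 1)) K :=
  Matrix.of fun i j => M.mat 0 i j

/-- The matrix of the arrow `β`, with cleanly displayed types. -/
def mat1 {h : Fin 5 → ℕ} (M : Rep K Q5 h) : Matrix (Fin (h 1)) (Fin (h 2)) K :=
  Matrix.of fun i j => M.mat 1 i j

lemma wt5 (θ : Fin 5 → ℤ) (e : Fin 5 → ℕ) :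
    wt (Q := Q5) θ e =
      θ 0 * e 0 + θ 1 * e 1 + θ 2 * e 2 + θ 3 * e 3 + θ 4 * e 4 :=
  Fin.sum_univ_five fun x => θ x * (e x : ℤ)

lemma mem_pairModVar_iff {h : Fin 5 → ℕ} (M : Rep K Q5 h) :
    M ∈ pairModVar K R5 h ↔ mat0 M * mat1 M = 0 := by
  constructor
  · intro hM
    ext i j
    have := hM 1 0 rfl i j
    rw [Matrix.mul_apply, Matrix.zero_apply]
    exact this
  · intro hrel a b hab i j
    have ha : a = 1 := congrArg Prod.fst hab
    have hb : b = 0 := congrArg Prod.snd hab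
    subst ha; subst hb
    have := congrFun (congrFun hrel i) j
    erw [Matrix.mul_apply, Matrix.zero_apply] at this
    exact this

lemma relv {h : Fin 5 → ℕ} {M : Rep K Q5 h} (hM : M ∈ pairModVar K R5 h)
    (u : Fin (h 2) → K) : (mat0 M).mulVec ((mat1 M).mulVec u) = 0 := by
  rw [Matrix.mulVec_mulVec, (mem_pairModVar_iff M).mp hM, Matrix.zero_mulVec]

end Aux
section Aux2

variable {K : Type} [Field K] {θ : Fin 5 → ℤ} {h : Fin 5 → ℕ} {M : Rep K Q5 h}

/-- subspace data for a subrepresentation -/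
abbrev Sp (K : Type) [Field K] (h : Fin 5 → ℕ) (x : Fin 5) := Submodule K (Fin (h x) → K)

lemma stab_cases (hst : IsStable K θ M) (W : SubRep K M) :
    W.dimVec K = 0 ∨ W.dimVec K = h ∨ wt θ (W.dimVec K) < 0 := by
  by_cases h0 : W.dimVec K = 0
  · exact Or.inl h0
  by_cases h1 : W.dimVec K = h
  · exact Or.inr (Or.inl h1)
  exact Or.inr (Or.inr (hst.2.2 W h0 h1))

/-- `0 → θ(h) = θ(1)*h(1)` helper: if all components except index 1 vanish. -/
lemma wt_eq_of_supp1 (hst : IsStable K θ M) (e0 : h 0 = 0) (e2 : h 2 = 0)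
    (e3 : h 3 = 0) (e4 : h 4 = 0) : θ 1 * (h 1 : ℤ) = 0 := by
  have := hst.2.1
  rw [wt5] at this
  rw [e0, e2, e3, e4] at this
  push_cast at this
  linarith

/-- **S1**: a stable module with `β = 0` forces `θ(1) > 0`. -/
lemma S1 (hθ : θ 1 ≠ 0) (h1 : 1 ≤ h 1) (hst : IsStable K θ M)
    (hβ : mat1 M = 0) : 0 < θ 1 := by
  classical
  let W : SubRep K M :=
    ⟨pick5 (α := Sp K h) ⊤ ⊥ ⊤ ⊤ ⊤, by
      intro a
      fin_cases a <;> simp only [Fin.reduceFinMk, Fin.isValue, Matrix.cons_val, Fin.zero_eta, Fin.mk_one]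
      · intro v _; exact Submodule.mem_top
      · intro v _
        show (mat1 M).mulVec v ∈ (⊥ : Sp K h 1)
        rw [hβ, Matrix.zero_mulVec]; exact Submodule.zero_mem _
      · intro v _; exact Submodule.mem_top
      · intro v _; exact Submodule.mem_top
      · intro v _; exact Submodule.mem_top⟩
  have d0 : W.dimVec K 0 = h 0 := by
    show Module.finrank K (⊤ : Sp K h 0) = h 0
    rw [finrank_top, Module.finrank_fin_fun]
  have d1 : W.dimVec K 1 = 0 := by
    show Module.finrank K (⊥ : Sp K h 1) = 0
    exact finrank_bot K _
  have d2 : W.dimVec K 2 = h 2 := by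
    show Module.finrank K (⊤ : Sp K h 2) = h 2
    rw [finrank_top, Module.finrank_fin_fun]
  have d3 : W.dimVec K 3 = h 3 := by
    show Module.finrank K (⊤ : Sp K h 3) = h 3
    rw [finrank_top, Module.finrank_fin_fun]
  have d4 : W.dimVec K 4 = h 4 := by
    show Module.finrank K (⊤ : Sp K h 4) = h 4
    rw [finrank_top, Module.finrank_fin_fun]
  rcases stab_cases hst W with hc | hc | hc
  · -- all components of h except index 1 vanish: contradiction with θ 1 ≠ 0
    have e0 : h 0 = 0 := by rw [← d0]; rw [hc]; rfl
    have e2 : h 2 = 0 := by rw [← d2]; rw [hc]; rfl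
    have e3 : h 3 = 0 := by rw [← d3]; rw [hc]; rfl
    have e4 : h 4 = 0 := by rw [← d4]; rw [hc]; rfl
    have := wt_eq_of_supp1 hst e0 e2 e3 e4
    rcases mul_eq_zero.mp this with h' | h'
    · exact absurd h' hθ
    · exact absurd h' (by exact_mod_cast Nat.one_le_iff_ne_zero.mp h1)
  · have := congrFun hc 1
    rw [d1] at this
    omega
  · rw [wt5, d0, d1, d2, d3, d4] at hc
    have h0' := hst.2.1
    rw [wt5] at h0'
    have hmul : 0 < θ 1 * (h 1 : ℤ) := by push_cast at hc h0' ⊢; linarith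
    rcases mul_pos_iff.mp hmul with ⟨hp, _⟩ | ⟨_, hneg⟩
    · exact hp
    · exact absurd hneg (not_lt.mpr (Int.natCast_nonneg _))

end Aux2
section Aux3

variable {K : Type} [Field K] {θ : Fin 5 → ℤ} {h : Fin 5 → ℕ} {M : Rep K Q5 h}

lemma matrix_eq_zero_of_mulVecLin {m n : ℕ} {A : Matrix (Fin m) (Fin n) K}
    (hA : A.mulVecLin = 0) : A = 0 := by
  apply Matrix.toLin'.injective
  rw [Matrix.toLin'_apply', Matrix.toLin'_apply', hA, Matrix.mulVecLin_zero]

/-- **S2**: a stable module with `α = 0` forces `θ(1) < 0`. -/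
lemma S2 (hθ : θ 1 ≠ 0) (h1 : 1 ≤ h 1) (hst : IsStable K θ M)
    (hα : mat0 M = 0) : θ 1 < 0 := by
  classical
  let W : SubRep K M :=
    ⟨pick5 (α := Sp K h) ⊥ ⊤ ⊥ ⊥ ⊥, by
      intro a
      fin_cases a <;> simp only [Fin.reduceFinMk, Fin.isValue, Matrix.cons_val, Fin.zero_eta, Fin.mk_one]
      · intro v _
        show (mat0 M).mulVec v ∈ (⊥ : Sp K h 0)
        rw [hα, Matrix.zero_mulVec]; exact Submodule.zero_mem _
      · intro v _; exact Submodule.mem_top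
      · intro v hv
        have hv' : v ∈ (⊥ : Sp K h 2) := hv
        obtain rfl := (Submodule.mem_bot K).mp hv'
        show (M.mat 2).mulVec 0 ∈ (⊥ : Sp K h 0)
        rw [Matrix.mulVec_zero]; exact Submodule.zero_mem _
      · intro v hv
        have hv' : v ∈ (⊥ : Sp K h 4) := hv
        obtain rfl := (Submodule.mem_bot K).mp hv'
        show (M.mat 3).mulVec 0 ∈ (⊥ : Sp K h 2)
        rw [Matrix.mulVec_zero]; exact Submodule.zero_mem _
      · intro v hv
        have hv' : v ∈ (⊥ : Sp K h 3) := hv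
        obtain rfl := (Submodule.mem_bot K).mp hv'
        show (M.mat 4).mulVec 0 ∈ (⊥ : Sp K h 2)
        rw [Matrix.mulVec_zero]; exact Submodule.zero_mem _⟩
  have d0 : W.dimVec K 0 = 0 := finrank_bot K _
  have d1 : W.dimVec K 1 = h 1 := by
    show Module.finrank K (⊤ : Sp K h 1) = h 1
    rw [finrank_top, Module.finrank_fin_fun]
  have d2 : W.dimVec K 2 = 0 := finrank_bot K _
  have d3 : W.dimVec K 3 = 0 := finrank_bot K _
  have d4 : W.dimVec K 4 = 0 := finrank_bot K _
  rcases stab_cases hst W with hc | hc | hc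
  · have e1 : h 1 = 0 := by rw [← d1, hc]; rfl
    omega
  · have e0 : h 0 = 0 := by rw [← congrFun hc 0]; exact d0
    have e2 : h 2 = 0 := by rw [← congrFun hc 2]; exact d2
    have e3 : h 3 = 0 := by rw [← congrFun hc 3]; exact d3
    have e4 : h 4 = 0 := by rw [← congrFun hc 4]; exact d4
    rcases mul_eq_zero.mp (wt_eq_of_supp1 hst e0 e2 e3 e4) with h' | h'
    · exact absurd h' hθ
    · exact absurd h' (by exact_mod_cast Nat.one_le_iff_ne_zero.mp h1)
  · rw [wt5, d0, d1, d2, d3, d4] at hc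
    have hmul : θ 1 * (h 1 : ℤ) < 0 := by push_cast at hc ⊢; linarith
    rcases mul_neg_iff.mp hmul with ⟨_, hneg⟩ | ⟨hn, _⟩
    · exact absurd hneg (not_lt.mpr (Int.natCast_nonneg _))
    · exact hn

/-- **S3**: a stable module with `ker M(α) ≠ 0` forces `θ(1) < 0`. -/
lemma S3 (hθ : θ 1 ≠ 0) (h1 : 1 ≤ h 1) (hst : IsStable K θ M)
    (hker : LinearMap.ker (mat0 M).mulVecLin ≠ ⊥) : θ 1 < 0 := by
  classical
  let W : SubRep K M :=
    ⟨pick5 (α := Sp K h) ⊥ (LinearMap.ker (mat0 M).mulVecLin) ⊥ ⊥ ⊥, by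
      intro a
      fin_cases a <;> simp only [Fin.reduceFinMk, Fin.isValue, Matrix.cons_val, Fin.zero_eta, Fin.mk_one]
      · intro v hv
        have hv' : v ∈ LinearMap.ker (mat0 M).mulVecLin := hv
        show (mat0 M).mulVec v ∈ (⊥ : Sp K h 0)
        rw [Submodule.mem_bot, ← Matrix.mulVecLin_apply]
        exact LinearMap.mem_ker.mp hv'
      · intro v hv
        have hv' : v ∈ (⊥ : Sp K h 2) := hv
        obtain rfl := (Submodule.mem_bot K).mp hv'
        show (mat1 M).mulVec 0 ∈ LinearMap.ker (mat0 M).mulVecLin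
        rw [Matrix.mulVec_zero]; exact Submodule.zero_mem _
      · intro v hv
        have hv' : v ∈ (⊥ : Sp K h 2) := hv
        obtain rfl := (Submodule.mem_bot K).mp hv'
        show (M.mat 2).mulVec 0 ∈ (⊥ : Sp K h 0)
        rw [Matrix.mulVec_zero]; exact Submodule.zero_mem _
      · intro v hv
        have hv' : v ∈ (⊥ : Sp K h 4) := hv
        obtain rfl := (Submodule.mem_bot K).mp hv'
        show (M.mat 3).mulVec 0 ∈ (⊥ : Sp K h 2)
        rw [Matrix.mulVec_zero]; exact Submodule.zero_mem _
      · intro v hv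
        have hv' : v ∈ (⊥ : Sp K h 3) := hv
        obtain rfl := (Submodule.mem_bot K).mp hv'
        show (M.mat 4).mulVec 0 ∈ (⊥ : Sp K h 2)
        rw [Matrix.mulVec_zero]; exact Submodule.zero_mem _⟩
  have d0 : W.dimVec K 0 = 0 := finrank_bot K _
  have d1 : W.dimVec K 1 = Module.finrank K (LinearMap.ker (mat0 M).mulVecLin) := rfl
  have d2 : W.dimVec K 2 = 0 := finrank_bot K _
  have d3 : W.dimVec K 3 = 0 := finrank_bot K _
  have d4 : W.dimVec K 4 = 0 := finrank_bot K _
  rcases stab_cases hst W with hc | hc | hc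
  · have e1 : Module.finrank K (LinearMap.ker (mat0 M).mulVecLin) = 0 := by
      rw [← d1, hc]; rfl
    exact absurd (Submodule.finrank_eq_zero.mp e1) hker
  · have e0 : h 0 = 0 := by rw [← congrFun hc 0]; exact d0
    have e2 : h 2 = 0 := by rw [← congrFun hc 2]; exact d2
    have e3 : h 3 = 0 := by rw [← congrFun hc 3]; exact d3
    have e4 : h 4 = 0 := by rw [← congrFun hc 4]; exact d4
    rcases mul_eq_zero.mp (wt_eq_of_supp1 hst e0 e2 e3 e4) with h' | h'
    · exact absurd h' hθ
    · exact absurd h' (by exact_mod_cast Nat.one_le_iff_ne_zero.mp h1)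
  · rw [wt5, d0, d1, d2, d3, d4] at hc
    have hmul : θ 1 * (Module.finrank K (LinearMap.ker (mat0 M).mulVecLin) : ℤ) < 0 := by
      push_cast at hc ⊢; linarith
    rcases mul_neg_iff.mp hmul with ⟨_, hneg⟩ | ⟨hn, _⟩
    · exact absurd hneg (not_lt.mpr (Int.natCast_nonneg _))
    · exact hn

/-- **S4**: a stable module of `A` with `β ≠ 0` forces `θ(1) < 0`. -/
lemma S4 (hst : IsStable K θ M) (hM : M ∈ pairModVar K R5 h)
    (hβne : mat1 M ≠ 0) : θ 1 < 0 := by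
  classical
  let W : SubRep K M :=
    ⟨pick5 (α := Sp K h) ⊥ (LinearMap.range (mat1 M).mulVecLin) ⊥ ⊥ ⊥, by
      intro a
      fin_cases a <;> simp only [Fin.reduceFinMk, Fin.isValue, Matrix.cons_val, Fin.zero_eta, Fin.mk_one]
      · intro v hv
        have hv' : v ∈ LinearMap.range (mat1 M).mulVecLin := hv
        obtain ⟨u, hu⟩ := hv'
        show (mat0 M).mulVec v ∈ (⊥ : Sp K h 0)
        rw [Submodule.mem_bot, ← hu, Matrix.mulVecLin_apply]
        exact relv hM u
      · intro v hv
        have hv' : v ∈ (⊥ : Sp K h 2) := hv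
        obtain rfl := (Submodule.mem_bot K).mp hv'
        show (mat1 M).mulVec 0 ∈ LinearMap.range (mat1 M).mulVecLin
        rw [Matrix.mulVec_zero]; exact Submodule.zero_mem _
      · intro v hv
        have hv' : v ∈ (⊥ : Sp K h 2) := hv
        obtain rfl := (Submodule.mem_bot K).mp hv'
        show (M.mat 2).mulVec 0 ∈ (⊥ : Sp K h 0)
        rw [Matrix.mulVec_zero]; exact Submodule.zero_mem _
      · intro v hv
        have hv' : v ∈ (⊥ : Sp K h 4) := hv
        obtain rfl := (Submodule.mem_bot K).mp hv'
        show (M.mat 3).mulVec 0 ∈ (⊥ : Sp K h 2)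
        rw [Matrix.mulVec_zero]; exact Submodule.zero_mem _
      · intro v hv
        have hv' : v ∈ (⊥ : Sp K h 3) := hv
        obtain rfl := (Submodule.mem_bot K).mp hv'
        show (M.mat 4).mulVec 0 ∈ (⊥ : Sp K h 2)
        rw [Matrix.mulVec_zero]; exact Submodule.zero_mem _⟩
  have d0 : W.dimVec K 0 = 0 := finrank_bot K _
  have d1 : W.dimVec K 1 = Module.finrank K (LinearMap.range (mat1 M).mulVecLin) := rfl
  have d2 : W.dimVec K 2 = 0 := finrank_bot K _
  have d3 : W.dimVec K 3 = 0 := finrank_bot K _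
  have d4 : W.dimVec K 4 = 0 := finrank_bot K _
  rcases stab_cases hst W with hc | hc | hc
  · have e1 : Module.finrank K (LinearMap.range (mat1 M).mulVecLin) = 0 := by
      rw [← d1, hc]; rfl
    have hrb : LinearMap.range (mat1 M).mulVecLin = ⊥ := Submodule.finrank_eq_zero.mp e1
    exact absurd (matrix_eq_zero_of_mulVecLin (LinearMap.range_eq_bot.mp hrb)) hβne
  · have e2 : h 2 = 0 := by rw [← congrFun hc 2]; exact d2
    have : mat1 M = 0 := by
      ext i j
      exact absurd j.isLt (by omega)
    exact absurd this hβne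
  · rw [wt5, d0, d1, d2, d3, d4] at hc
    have hmul : θ 1 * (Module.finrank K (LinearMap.range (mat1 M).mulVecLin) : ℤ) < 0 := by
      push_cast at hc ⊢; linarith
    rcases mul_neg_iff.mp hmul with ⟨_, hneg⟩ | ⟨hn, _⟩
    · exact absurd hneg (not_lt.mpr (Int.natCast_nonneg _))
    · exact hn

/-- **S5**: a stable module of `A` with `α ≠ 0` forces `θ(1) > 0`. -/
lemma S5 (hst : IsStable K θ M) (hM : M ∈ pairModVar K R5 h)
    (hαne : mat0 M ≠ 0) : 0 < θ 1 := by
  classical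
  let W : SubRep K M :=
    ⟨pick5 (α := Sp K h) ⊤ (LinearMap.ker (mat0 M).mulVecLin) ⊤ ⊤ ⊤, by
      intro a
      fin_cases a <;> simp only [Fin.reduceFinMk, Fin.isValue, Matrix.cons_val, Fin.zero_eta, Fin.mk_one]
      · intro v _; exact Submodule.mem_top
      · intro v _
        show (mat1 M).mulVec v ∈ LinearMap.ker (mat0 M).mulVecLin
        rw [LinearMap.mem_ker, Matrix.mulVecLin_apply]
        exact relv hM v
      · intro v _; exact Submodule.mem_top
      · intro v _; exact Submodule.mem_top
      · intro v _; exact Submodule.mem_top⟩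
  have d0 : W.dimVec K 0 = h 0 := by
    show Module.finrank K (⊤ : Sp K h 0) = h 0
    rw [finrank_top, Module.finrank_fin_fun]
  have d1 : W.dimVec K 1 = Module.finrank K (LinearMap.ker (mat0 M).mulVecLin) := rfl
  have d2 : W.dimVec K 2 = h 2 := by
    show Module.finrank K (⊤ : Sp K h 2) = h 2
    rw [finrank_top, Module.finrank_fin_fun]
  have d3 : W.dimVec K 3 = h 3 := by
    show Module.finrank K (⊤ : Sp K h 3) = h 3
    rw [finrank_top, Module.finrank_fin_fun]
  have d4 : W.dimVec K 4 = h 4 := by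
    show Module.finrank K (⊤ : Sp K h 4) = h 4
    rw [finrank_top, Module.finrank_fin_fun]
  set k := Module.finrank K (LinearMap.ker (mat0 M).mulVecLin) with hk
  have hkle : k ≤ h 1 := by
    have := Submodule.finrank_le (LinearMap.ker (mat0 M).mulVecLin)
    rwa [Module.finrank_fin_fun] at this
  have hkne : k ≠ h 1 := by
    intro hkeq
    have : LinearMap.ker (mat0 M).mulVecLin = ⊤ := by
      apply Submodule.eq_top_of_finrank_eq
      rw [← hk, hkeq, Module.finrank_fin_fun]
    exact hαne (matrix_eq_zero_of_mulVecLin (LinearMap.ker_eq_top.mp this))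
  rcases stab_cases hst W with hc | hc | hc
  · have e0 : h 0 = 0 := by rw [← d0, hc]; rfl
    have : mat0 M = 0 := by
      ext i j
      exact absurd i.isLt (by omega)
    exact absurd this hαne
  · have := congrFun hc 1
    rw [d1] at this
    exact absurd this hkne
  · rw [wt5, d0, d1, d2, d3, d4] at hc
    have h0' := hst.2.1
    rw [wt5] at h0'
    have hmul : θ 1 * (k : ℤ) < θ 1 * (h 1 : ℤ) := by push_cast at hc h0' ⊢; linarith
    by_contra hle
    push_neg at hle
    have := mul_le_mul_of_nonpos_left (by exact_mod_cast hkle : (k : ℤ) ≤ (h 1 : ℤ)) hle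
    linarith

/-- **S6**: a stable module with `θ(1) < 0` has surjective `M(β)`. -/
lemma S6 (hθ : θ 1 ≠ 0) (h1 : 1 ≤ h 1) (hst : IsStable K θ M)
    (hneg : θ 1 < 0) : LinearMap.range (mat1 M).mulVecLin = ⊤ := by
  classical
  let W : SubRep K M :=
    ⟨pick5 (α := Sp K h) ⊤ (LinearMap.range (mat1 M).mulVecLin) ⊤ ⊤ ⊤, by
      intro a
      fin_cases a <;> simp only [Fin.reduceFinMk, Fin.isValue, Matrix.cons_val, Fin.zero_eta, Fin.mk_one]
      · intro v _; exact Submodule.mem_top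
      · intro v _
        show (mat1 M).mulVec v ∈ LinearMap.range (mat1 M).mulVecLin
        exact LinearMap.mem_range.mpr ⟨v, Matrix.mulVecLin_apply _ _⟩
      · intro v _; exact Submodule.mem_top
      · intro v _; exact Submodule.mem_top
      · intro v _; exact Submodule.mem_top⟩
  have d0 : W.dimVec K 0 = h 0 := by
    show Module.finrank K (⊤ : Sp K h 0) = h 0
    rw [finrank_top, Module.finrank_fin_fun]
  have d1 : W.dimVec K 1 = Module.finrank K (LinearMap.range (mat1 M).mulVecLin) := rfl
  have d2 : W.dimVec K 2 = h 2 := by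
    show Module.finrank K (⊤ : Sp K h 2) = h 2
    rw [finrank_top, Module.finrank_fin_fun]
  have d3 : W.dimVec K 3 = h 3 := by
    show Module.finrank K (⊤ : Sp K h 3) = h 3
    rw [finrank_top, Module.finrank_fin_fun]
  have d4 : W.dimVec K 4 = h 4 := by
    show Module.finrank K (⊤ : Sp K h 4) = h 4
    rw [finrank_top, Module.finrank_fin_fun]
  set r := Module.finrank K (LinearMap.range (mat1 M).mulVecLin) with hr
  have hrle : r ≤ h 1 := by
    have := Submodule.finrank_le (LinearMap.range (mat1 M).mulVecLin)
    rwa [Module.finrank_fin_fun] at this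
  rcases stab_cases hst W with hc | hc | hc
  · have e0 : h 0 = 0 := by rw [← d0, hc]; rfl
    have e2 : h 2 = 0 := by rw [← d2, hc]; rfl
    have e3 : h 3 = 0 := by rw [← d3, hc]; rfl
    have e4 : h 4 = 0 := by rw [← d4, hc]; rfl
    rcases mul_eq_zero.mp (wt_eq_of_supp1 hst e0 e2 e3 e4) with h' | h'
    · exact absurd h' hθ
    · exact absurd h' (by exact_mod_cast Nat.one_le_iff_ne_zero.mp h1)
  · have := congrFun hc 1
    rw [d1] at this
    apply Submodule.eq_top_of_finrank_eq
    rw [← hr, this, Module.finrank_fin_fun]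
  · rw [wt5, d0, d1, d2, d3, d4] at hc
    have h0' := hst.2.1
    rw [wt5] at h0'
    have hmul : θ 1 * (r : ℤ) < θ 1 * (h 1 : ℤ) := by push_cast at hc h0' ⊢; linarith
    have := mul_le_mul_of_nonpos_left (by exact_mod_cast hrle : (r : ℤ) ≤ (h 1 : ℤ)) hneg.le
    linarith

end Aux3
section Aux4

open MvPolynomial in
/-- The distinguished opens form a basis of the Zariski topology on affine space. -/
lemma affBasis (K : Type) [Field K] (ι : Type) :
    TopologicalSpace.IsTopologicalBasis
      {U : Set (AffSp K ι) | ∃ p : MvPolynomial ι K,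
        U = {x : AffSp K ι | MvPolynomial.eval x p ≠ 0}} := by
  refine ⟨?_, ?_, rfl⟩
  · rintro t₁ ⟨p, rfl⟩ t₂ ⟨q, rfl⟩ x ⟨hx1, hx2⟩
    refine ⟨{x : AffSp K ι | MvPolynomial.eval x (p * q) ≠ 0}, ⟨p * q, rfl⟩, ?_, ?_⟩
    · show MvPolynomial.eval x (p * q) ≠ 0
      rw [map_mul]
      exact mul_ne_zero hx1 hx2
    · intro y hy
      have hy' : MvPolynomial.eval y p * MvPolynomial.eval y q ≠ 0 := by
        rw [← map_mul]; exact hy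
      exact ⟨left_ne_zero_of_mul hy', right_ne_zero_of_mul hy'⟩
  · apply Set.eq_univ_of_univ_subset
    intro x _
    refine ⟨{x : AffSp K ι | MvPolynomial.eval x 1 ≠ 0}, ⟨1, rfl⟩, ?_⟩
    show MvPolynomial.eval x 1 ≠ 0
    rw [map_one]
    exact one_ne_zero

variable {K : Type} [Field K] {h : Fin 5 → ℕ}

lemma isOpen_evalne (p : MvPolynomial (CoordIdx Q5 h) K) :
    IsOpen {M : Rep K Q5 h | MvPolynomial.eval (Rep.coords K M) p ≠ 0} := by
  have : {M : Rep K Q5 h | MvPolynomial.eval (Rep.coords K M) p ≠ 0} =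
     Rep.coords K ⁻¹' {x | MvPolynomial.eval x p ≠ 0} := rfl
  rw [this]
  exact (TopologicalSpace.IsTopologicalBasis.isOpen (affBasis K _) ⟨p, rfl⟩).preimage
    continuous_induced_dom

lemma closed_vanish (a0 : Fin 5) :
    IsClosed {M : Rep K Q5 h | M.mat a0 = 0} := by
  rw [← isOpen_compl_iff]
  have : {M : Rep K Q5 h | M.mat a0 = 0}ᶜ = ⋃ (i) (j),
      {M : Rep K Q5 h | MvPolynomial.eval (Rep.coords K M)
        (MvPolynomial.X (⟨a0, (i, j)⟩ : CoordIdx Q5 h)) ≠ 0} := by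
    ext M
    simp only [Set.mem_compl_iff, Set.mem_setOf_eq, Set.mem_iUnion, MvPolynomial.eval_X]
    constructor
    · intro hM
      by_contra hc
      push_neg at hc
      exact hM (by ext i j; exact ((MvPolynomial.eval_X (f := Rep.coords K M) (⟨a0, (i, j)⟩ : CoordIdx Q5 h)).symm.trans (hc i j) : M.mat a0 i j = 0))
    · rintro ⟨i, j, hij⟩ hM
      refine hij ?_
      refine (MvPolynomial.eval_X _).trans ?_
      show M.mat a0 i j = 0
      rw [hM]
      rfl
  rw [this]
  exact isOpen_iUnion fun i => isOpen_iUnion fun j => isOpen_evalne _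

/-- Substituting `0` for the coordinates of the arrow `a0`. -/
noncomputable def maskP (a0 : Fin 5) (p : MvPolynomial (CoordIdx Q5 h) K) :
    MvPolynomial (CoordIdx Q5 h) K :=
  MvPolynomial.eval₂ MvPolynomial.C
    (fun c : CoordIdx Q5 h => if c.1 = a0 then 0 else MvPolynomial.X c) p

lemma eval_maskP (a0 : Fin 5) (p : MvPolynomial (CoordIdx Q5 h) K)
    (x : AffSp K (CoordIdx Q5 h)) :
    MvPolynomial.eval x (maskP a0 p) =
      MvPolynomial.eval (fun c => if c.1 = a0 then 0 else x c) p := by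
  have hfun : (⇑(MvPolynomial.eval x) ∘ fun c : CoordIdx Q5 h =>
      if c.1 = a0 then 0 else MvPolynomial.X c) =
      (fun c : CoordIdx Q5 h => if c.1 = a0 then 0 else x c) := by
    funext c
    by_cases hc : c.1 = a0 <;> simp [hc]
    exact MvPolynomial.eval_X _
  rw [maskP]; exact (MvPolynomial.eval_assoc _ x p).symm.trans (congrArg (fun g => MvPolynomial.eval g p) hfun)

/-- The subvariety cut out by one arrow vanishing is irreducible. -/
lemma irred_vanish [CharZero K] (a0 : Fin 5) :
    IsIrreducible {M : Rep K Q5 h | M.mat a0 = 0} := by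
  classical
  constructor
  · exact ⟨⟨fun _ => 0⟩, rfl⟩
  · rintro u v hu hv ⟨z1, hz1Z, hz1u⟩ ⟨z2, hz2Z, hz2v⟩
    rw [isOpen_induced_iff] at hu hv
    obtain ⟨U', hU', rfl⟩ := hu
    obtain ⟨V', hV', rfl⟩ := hv
    obtain ⟨t1, ⟨p, rfl⟩, hz1t, ht1U⟩ :=
      (affBasis K (CoordIdx Q5 h)).exists_subset_of_mem_open hz1u hU'
    obtain ⟨t2, ⟨q, rfl⟩, hz2t, ht2V⟩ :=
      (affBasis K (CoordIdx Q5 h)).exists_subset_of_mem_open hz2v hV'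
    -- masking fixes points of the subvariety
    have hfix : ∀ z : Rep K Q5 h, z.mat a0 = 0 →
        (fun c : CoordIdx Q5 h => if c.1 = a0 then 0 else Rep.coords K z c) =
          Rep.coords K z := by
      intro z hz
      funext c
      obtain ⟨a, ij⟩ := c
      by_cases ha : a = a0
      · subst ha
        have : Rep.coords K z ⟨a, ij⟩ = 0 := by
          show z.mat a ij.1 ij.2 = 0
          rw [hz]; rfl
        rw [this, if_pos rfl]
      · rw [if_neg ha]
    have hp' : maskP a0 p ≠ 0 := by
      intro h0
      apply hz1t
      show MvPolynomial.eval (Rep.coords K z1) p = 0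
      rw [← hfix z1 hz1Z, ← eval_maskP, h0, map_zero]
    have hq' : maskP a0 q ≠ 0 := by
      intro h0
      apply hz2t
      show MvPolynomial.eval (Rep.coords K z2) q = 0
      rw [← hfix z2 hz2Z, ← eval_maskP, h0, map_zero]
    have hpq : maskP a0 p * maskP a0 q ≠ 0 := mul_ne_zero hp' hq'
    have hex : ∃ x : AffSp K (CoordIdx Q5 h),
        MvPolynomial.eval x (maskP a0 p * maskP a0 q) ≠ 0 := by
      by_contra hcon
      push_neg at hcon
      exact hpq (MvPolynomial.funext fun x => by rw [hcon x, map_zero])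
    obtain ⟨x0, hx0⟩ := hex
    rw [map_mul] at hx0
    set z : Rep K Q5 h :=
      ⟨fun a => if a = a0 then 0 else Matrix.of fun i j => x0 ⟨a, (i, j)⟩⟩ with hzdef
    have hzc : Rep.coords K z = fun c : CoordIdx Q5 h =>
        if c.1 = a0 then 0 else x0 c := by
      funext c
      obtain ⟨a, ij⟩ := c
      show z.mat a ij.1 ij.2 = _
      by_cases ha : a = a0
      · subst ha
        show (if a = a then (0 : Matrix _ _ K)
          else Matrix.of fun i j => x0 ⟨a, (i, j)⟩) ij.1 ij.2 = _
        rw [if_pos rfl, if_pos rfl]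
        rfl
      · show (if a = a0 then (0 : Matrix _ _ K)
          else Matrix.of fun i j => x0 ⟨a, (i, j)⟩) ij.1 ij.2 = _
        rw [if_neg ha, if_neg ha]
        rfl
    have hzZ : z.mat a0 = 0 := by
      show (if a0 = a0 then (0 : Matrix _ _ K)
        else Matrix.of fun i j => x0 ⟨a0, (i, j)⟩) = 0
      rw [if_pos rfl]
    refine ⟨z, hzZ, ?_, ?_⟩
    · apply ht1U
      show MvPolynomial.eval (Rep.coords K z) p ≠ 0
      rw [hzc, ← eval_maskP]
      exact left_ne_zero_of_mul hx0
    · apply ht2V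
      show MvPolynomial.eval (Rep.coords K z) q ≠ 0
      rw [hzc, ← eval_maskP]
      exact right_ne_zero_of_mul hx0

end Aux4
section Aux5

variable {K : Type} [Field K] {θ : Fin 5 → ℤ} {h : Fin 5 → ℕ}

lemma Zβ_sub : {M : Rep K Q5 h | M.mat 1 = 0} ⊆ pairModVar K R5 h := by
  intro M hM
  apply (mem_pairModVar_iff M).mpr
  have hz : mat1 M = 0 := hM
  rw [hz, Matrix.mul_zero]

lemma Zα_sub : {M : Rep K Q5 h | M.mat 0 = 0} ⊆ pairModVar K R5 h := by
  intro M hM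
  apply (mem_pairModVar_iff M).mpr
  have hz : mat0 M = 0 := hM
  rw [hz, Matrix.zero_mul]

lemma cert_left (B : Matrix (Fin (h 1)) (Fin (h 0)) K) :
    ∃ p : MvPolynomial (CoordIdx Q5 h) K, ∀ M : Rep K Q5 h,
      MvPolynomial.eval (Rep.coords K M) p = (B * mat0 M).det := by
  classical
  refine ⟨(Matrix.of fun i j : Fin (h 1) =>
    ∑ k : Fin (h 0), MvPolynomial.C (B i k) *
      MvPolynomial.X (⟨0, (k, j)⟩ : CoordIdx Q5 h)).det, fun M => ?_⟩
  rw [RingHom.map_det]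
  congr 1
  ext i j
  rw [RingHom.mapMatrix_apply, Matrix.map_apply, Matrix.of_apply, map_sum, Matrix.mul_apply]
  refine Finset.sum_congr rfl fun k _ => ?_
  refine (map_mul _ _ _).trans ?_
  congr 1
  · exact MvPolynomial.eval_C _
  · exact MvPolynomial.eval_X _

lemma cert_right (C0 : Matrix (Fin (h 2)) (Fin (h 1)) K) :
    ∃ p : MvPolynomial (CoordIdx Q5 h) K, ∀ M : Rep K Q5 h,
      MvPolynomial.eval (Rep.coords K M) p = (mat1 M * C0).det := by
  classical
  refine ⟨(Matrix.of fun i j : Fin (h 1) =>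
    ∑ k : Fin (h 2), MvPolynomial.X (⟨1, (i, k)⟩ : CoordIdx Q5 h) *
      MvPolynomial.C (C0 k j)).det, fun M => ?_⟩
  rw [RingHom.map_det]
  congr 1
  ext i j
  rw [RingHom.mapMatrix_apply, Matrix.map_apply, Matrix.of_apply, map_sum, Matrix.mul_apply]
  refine Finset.sum_congr rfl fun k _ => ?_
  refine (map_mul _ _ _).trans ?_
  congr 1
  · exact MvPolynomial.eval_X _
  · exact MvPolynomial.eval_C _

/-- In the case `θ(1) > 0`, every θ-stable irreducible component equals `mod(D₅,h)`. -/
lemma comp_eq_Z [CharZero K] (hθ : θ 1 ≠ 0) (hone : 1 ≤ h 1) (hpos : 0 < θ 1)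
    {C : Set (Rep K Q5 h)} (hC : IsIrrComp K (pairModVar K R5 h) C)
    {M₁ : Rep K Q5 h} (hM₁C : M₁ ∈ C) (hst : IsStable K θ M₁) :
    C = {M : Rep K Q5 h | M.mat 1 = 0} := by
  classical
  have hker : LinearMap.ker (mat0 M₁).mulVecLin = ⊥ := by
    by_contra hk
    exact absurd (S3 hθ hone hst hk) (by linarith)
  obtain ⟨g, hg⟩ := (mat0 M₁).mulVecLin.exists_leftInverse_of_injective hker
  have hBA : LinearMap.toMatrix' g * mat0 M₁ = 1 := by
    have h2 : LinearMap.toMatrix' (g ∘ₗ (mat0 M₁).mulVecLin) =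
        LinearMap.toMatrix' (LinearMap.id (R := K) (M := Fin (h 1) → K)) := by rw [hg]
    rwa [LinearMap.toMatrix'_comp, ← Matrix.toLin'_apply', LinearMap.toMatrix'_toLin',
      LinearMap.toMatrix'_id] at h2
  obtain ⟨p, hp⟩ := cert_left (LinearMap.toMatrix' g)
  have hMem : M₁ ∈ {M : Rep K Q5 h | MvPolynomial.eval (Rep.coords K M) p ≠ 0} := by
    show _ ≠ 0
    rw [hp M₁, hBA, Matrix.det_one]
    exact one_ne_zero
  have hsub : C ⊆ {M : Rep K Q5 h | M.mat 1 = 0} := by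
    by_contra hnsub
    obtain ⟨y, hyC, hyZ⟩ := Set.not_subset.mp hnsub
    obtain ⟨w, hwC, hwZc, hwp⟩ := hC.2.2.1.2 _ _ ((closed_vanish 1).isOpen_compl)
      (isOpen_evalne p) ⟨y, hyC, hyZ⟩ ⟨M₁, hM₁C, hMem⟩
    apply hwZc
    have hrelw : mat0 w * mat1 w = 0 := (mem_pairModVar_iff w).mp (hC.1 hwC)
    have hdet : IsUnit (LinearMap.toMatrix' g * mat0 w).det := by
      apply Ne.isUnit
      rw [← hp w]
      exact hwp
    have h3 : (LinearMap.toMatrix' g * mat0 w) * mat1 w = 0 := by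
      rw [Matrix.mul_assoc, hrelw, Matrix.mul_zero]
    have hz : mat1 w = 0 := by
      calc mat1 w = ((LinearMap.toMatrix' g * mat0 w)⁻¹ *
            (LinearMap.toMatrix' g * mat0 w)) * mat1 w := by
            rw [Matrix.nonsing_inv_mul _ hdet, Matrix.one_mul]
        _ = (LinearMap.toMatrix' g * mat0 w)⁻¹ *
            ((LinearMap.toMatrix' g * mat0 w) * mat1 w) := by rw [Matrix.mul_assoc]
        _ = 0 := by rw [h3, Matrix.mul_zero]
    exact hz
  exact hC.2.2.2 _ Zβ_sub (closed_vanish 1) (irred_vanish 1) hsub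

/-- In the case `θ(1) < 0`, every θ-stable irreducible component equals `mod(D̃₄,h)`. -/
lemma comp_eq_Z' [CharZero K] (hθ : θ 1 ≠ 0) (hone : 1 ≤ h 1) (hneg : θ 1 < 0)
    {C : Set (Rep K Q5 h)} (hC : IsIrrComp K (pairModVar K R5 h) C)
    {M₁ : Rep K Q5 h} (hM₁C : M₁ ∈ C) (hst : IsStable K θ M₁) :
    C = {M : Rep K Q5 h | M.mat 0 = 0} := by
  classical
  have hrange : LinearMap.range (mat1 M₁).mulVecLin = ⊤ := S6 hθ hone hst hneg
  obtain ⟨g, hg⟩ := (mat1 M₁).mulVecLin.exists_rightInverse_of_surjective hrange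
  have hAC : mat1 M₁ * LinearMap.toMatrix' g = 1 := by
    have h2 : LinearMap.toMatrix' ((mat1 M₁).mulVecLin ∘ₗ g) =
        LinearMap.toMatrix' (LinearMap.id (R := K) (M := Fin (h 1) → K)) := by rw [hg]
    rwa [LinearMap.toMatrix'_comp, ← Matrix.toLin'_apply', LinearMap.toMatrix'_toLin',
      LinearMap.toMatrix'_id] at h2
  obtain ⟨p, hp⟩ := cert_right (LinearMap.toMatrix' g)
  have hMem : M₁ ∈ {M : Rep K Q5 h | MvPolynomial.eval (Rep.coords K M) p ≠ 0} := by
    show _ ≠ 0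
    rw [hp M₁, hAC, Matrix.det_one]
    exact one_ne_zero
  have hsub : C ⊆ {M : Rep K Q5 h | M.mat 0 = 0} := by
    by_contra hnsub
    obtain ⟨y, hyC, hyZ⟩ := Set.not_subset.mp hnsub
    obtain ⟨w, hwC, hwZc, hwp⟩ := hC.2.2.1.2 _ _ ((closed_vanish 0).isOpen_compl)
      (isOpen_evalne p) ⟨y, hyC, hyZ⟩ ⟨M₁, hM₁C, hMem⟩
    apply hwZc
    have hrelw : mat0 w * mat1 w = 0 := (mem_pairModVar_iff w).mp (hC.1 hwC)
    have hdet : IsUnit (mat1 w * LinearMap.toMatrix' g).det := by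
      apply Ne.isUnit
      rw [← hp w]
      exact hwp
    have h3 : mat0 w * (mat1 w * LinearMap.toMatrix' g) = 0 := by
      rw [← Matrix.mul_assoc, hrelw, Matrix.zero_mul]
    have hz : mat0 w = 0 := by
      calc mat0 w = mat0 w * ((mat1 w * LinearMap.toMatrix' g) *
            (mat1 w * LinearMap.toMatrix' g)⁻¹) := by
            rw [Matrix.mul_nonsing_inv _ hdet, Matrix.mul_one]
        _ = (mat0 w * (mat1 w * LinearMap.toMatrix' g)) *
            (mat1 w * LinearMap.toMatrix' g)⁻¹ := (Matrix.mul_assoc _ _ _).symm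
        _ = 0 := by rw [h3, Matrix.zero_mul]
    exact hz
  exact hC.2.2.2 _ Zα_sub (closed_vanish 0) (irred_vanish 0) hsub

end Aux5
/-- For the algebra `A = KQ5/⟨αβ⟩` and a weight `θ` with
`θ(2) ≠ 0` (vertex `2` is index `1`): (a) for every θ-semi-stable dimension
vector `h`, the module variety `mod(A,h)` has at most one θ-stable irreducible
component; (b) for θ-stable dimension vectors `h₁, h₂` with
`h₁(2), h₂(2) ≥ 1`, the θ-stable loci `mod(D₅,h₁)^s_θ` and `mod(D̃₄,h₂)^s_θ`
cannot both be non-empty. -/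
theorem separation_of_stable_components_for_Q5
    (K : Type) [Field K] [IsAlgClosed K] [CharZero K]
    (θ : Fin 5 → ℤ) (hθ : θ 1 ≠ 0) :
    (∀ h : Fin 5 → ℕ, (∃ M ∈ pairModVar K R5 h, IsSemiStable K θ M) →
      ∀ C₁ C₂ : Set (Rep K Q5 h),
        IsIrrComp K (pairModVar K R5 h) C₁ → (∃ M ∈ C₁, IsStable K θ M) →
        IsIrrComp K (pairModVar K R5 h) C₂ → (∃ M ∈ C₂, IsStable K θ M) →
        C₁ = C₂) ∧
    (∀ h₁ h₂ : Fin 5 → ℕ,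
      (∃ M ∈ pairModVar K R5 h₁, IsStable K θ M) →
      (∃ M ∈ pairModVar K R5 h₂, IsStable K θ M) →
      1 ≤ h₁ 1 → 1 ≤ h₂ 1 →
      ¬ ((∃ M ∈ D5Var K h₁, IsStable K θ M) ∧ (∃ N ∈ D4tVar K h₂, IsStable K θ N))) := by
  constructor
  · -- (a) at most one θ-stable irreducible component
    intro h _hss C₁ C₂ hC₁ hM₁ hC₂ hM₂
    by_cases hh1 : h 1 = 0
    · -- vertex 2 has dimension zero: the whole module variety is irreducible
      have hall : ∀ M : Rep K Q5 h, M.mat 1 = 0 := by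
        intro M
        ext i j
        have hi : (i : ℕ) < h 1 := i.isLt
        omega
      have e1 := hC₁.2.2.2 _ Zβ_sub (closed_vanish 1) (irred_vanish 1)
        (fun M _ => hall M)
      have e2 := hC₂.2.2.2 _ Zβ_sub (closed_vanish 1) (irred_vanish 1)
        (fun M _ => hall M)
      rw [e1, e2]
    · have hone : 1 ≤ h 1 := Nat.one_le_iff_ne_zero.mpr hh1
      obtain ⟨M₁, hM₁C, hst₁⟩ := hM₁
      obtain ⟨M₂, hM₂C, hst₂⟩ := hM₂
      rcases hθ.lt_or_gt with hneg | hpos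
      · rw [comp_eq_Z' hθ hone hneg hC₁ hM₁C hst₁,
          comp_eq_Z' hθ hone hneg hC₂ hM₂C hst₂]
      · rw [comp_eq_Z hθ hone hpos hC₁ hM₁C hst₁,
          comp_eq_Z hθ hone hpos hC₂ hM₂C hst₂]
  · -- (b) the two hereditary stable loci cannot both be non-empty
    intro h₁ h₂ _hs1 _hs2 hb1 hb2 hcon
    obtain ⟨⟨M, hM5, hMst⟩, ⟨N, hN4, hNst⟩⟩ := hcon
    have hMpos : 0 < θ 1 := S1 hθ hb1 hMst hM5
    have hNneg : θ 1 < 0 := S2 hθ hb2 hNst hN4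
    linarith

end ModuliPaper
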